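/- arXiv:2210.02581 — 2 statements merged into one kernel-verified Lean document; each statement's English description precedes it below -/
import Mathlib

section
/- Let n ≥ 1 and 2 ≤ p < ∞. Then for every ξ, η ∈ ℝ^n one has ⟨H_{p−1}(ξ) − H_{p−1}(η), ξ − η⟩ ≥ (4/p²) |H_{p/2}(ξ) − H_{p/2}(η)|². -/
open MeasureTheory Set ENNReal
open scoped Classical

noncomputable section

/-- `H_λ(ξ) = (|ξ| - 1)_+^λ · ξ/|ξ|`, with `H_λ(0) = 0`. -/
def Hfun {n : ℕ} (lam : ℝ) (ξ : EuclideanSpace ℝ (Fin n)) : EuclideanSpace ℝ (Fin n) :=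
  if ξ = 0 then 0 else ((max (‖ξ‖ - 1) 0) ^ lam / ‖ξ‖) • ξ

private lemma cs_aux (A B C D : ℝ) : (A*C + D*B)^2 ≤ (A*A + D*D) * (C*C + B*B) := by
  nlinarith [sq_nonneg (A*B - D*C)]

/-- Convexity upper bound: `u^λ - v^λ ≤ λ u^{λ-1}(u-v)` for `0 ≤ v ≤ u`, `1 ≤ λ`. -/
private lemma bern_upper {lam u v : ℝ} (hlam : 1 ≤ lam) (hv : 0 ≤ v) (huv : v ≤ u) (hu0 : 0 < u) :
    u ^ lam - v ^ lam ≤ lam * u ^ (lam - 1) * (u - v) := by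
  have hs : (-1 : ℝ) ≤ (v - u) / u := by
    rw [le_div_iff₀ hu0]; linarith
  have hB := one_add_mul_self_le_rpow_one_add hs hlam
  have h1 : (1 : ℝ) + (v - u) / u = v / u := by field_simp; ring
  rw [h1, Real.div_rpow hv hu0.le] at hB
  have hupos : (0 : ℝ) < u ^ lam := Real.rpow_pos_of_pos hu0 _
  have hB2 : (1 + lam * ((v - u) / u)) * u ^ lam ≤ v ^ lam := by
    rw [← le_div_iff₀ hupos]
    exact hB
  have hx : u ^ (lam - 1) = u ^ lam / u := by
    rw [Real.rpow_sub hu0, Real.rpow_one]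
  rw [hx]
  have hrw : (1 + lam * ((v - u) / u)) * u ^ lam = u ^ lam - lam * (u ^ lam / u) * (u - v) := by
    field_simp; ring
  linarith [hrw ▸ hB2]

private lemma key1 {p u v : ℝ} (hp : 2 ≤ p) (hv : 0 ≤ v) (huv : v ≤ u) :
    4 / p ^ 2 * (u ^ (p / 2) - v ^ (p / 2)) ^ 2 ≤ (u ^ (p - 1) - v ^ (p - 1)) * (u - v) := by
  have hu : 0 ≤ u := hv.trans huv
  have hppos : (0 : ℝ) < p := by linarith
  rcases eq_or_lt_of_le hu with h0 | hu0
  · have hv0 : v = 0 := le_antisymm (huv.trans h0.symm.le) hv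
    subst hv0
    rw [← h0]
    simp
  · have hb := bern_upper (lam := p / 2) (by linarith) hv huv hu0
    have hnn : 0 ≤ u ^ (p / 2) - v ^ (p / 2) :=
      sub_nonneg.2 (Real.rpow_le_rpow hv huv (by positivity))
    have hsq : (u ^ (p / 2) - v ^ (p / 2)) ^ 2 ≤ (p / 2 * u ^ (p / 2 - 1) * (u - v)) ^ 2 :=
      pow_le_pow_left₀ hnn hb 2
    have hx : u ^ (p / 2 - 1) * u ^ (p / 2 - 1) = u ^ (p - 2) := by
      rw [← Real.rpow_add hu0]; ring_nf
    have hu1 : u ^ (p - 1) = u ^ (p - 2) * u := by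
      rw [← Real.rpow_add_one hu0.ne']; ring_nf
    have hv1 : v ^ (p - 1) = v ^ (p - 2) * v := by
      rcases eq_or_lt_of_le hv with h | hvpos
      · rw [← h, Real.zero_rpow (ne_of_gt (by linarith : (0:ℝ) < p - 1))]
        simp
      · rw [← Real.rpow_add_one hvpos.ne']; ring_nf
    have hmb : v ^ (p - 2) ≤ u ^ (p - 2) := Real.rpow_le_rpow hv huv (by linarith)
    have hstep : u ^ (p - 2) * (u - v) ≤ u ^ (p - 1) - v ^ (p - 1) := by
      rw [hu1, hv1]
      have := mul_le_mul_of_nonneg_right hmb hv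
      nlinarith
    have huvnn : 0 ≤ u - v := sub_nonneg.2 huv
    have hfin : 4 / p ^ 2 * (p / 2 * u ^ (p / 2 - 1) * (u - v)) ^ 2
        = u ^ (p - 2) * (u - v) ^ 2 := by
      rw [← hx]; field_simp; ring
    calc 4 / p ^ 2 * (u ^ (p / 2) - v ^ (p / 2)) ^ 2
        ≤ 4 / p ^ 2 * (p / 2 * u ^ (p / 2 - 1) * (u - v)) ^ 2 := by
          apply mul_le_mul_of_nonneg_left hsq (by positivity)
      _ = u ^ (p - 2) * (u - v) ^ 2 := hfin
      _ = (u ^ (p - 2) * (u - v)) * (u - v) := by ring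
      _ ≤ (u ^ (p - 1) - v ^ (p - 1)) * (u - v) :=
          mul_le_mul_of_nonneg_right hstep huvnn

private lemma key2 {p u v : ℝ} (hp : 2 ≤ p) (hu : 0 ≤ u) (hv : 0 ≤ v) :
    (u ^ (p / 2) + v ^ (p / 2)) ^ 2 ≤ (u ^ (p - 1) + v ^ (p - 1)) * (u + v) := by
  have hp1 : ((p-1)/2 + (p-1)/2 : ℝ) ≠ 0 := by
    intro h; nlinarith
  have hp2 : ((p-1)/2 + 1/2 : ℝ) ≠ 0 := by
    intro h; nlinarith
  have h1 : u ^ ((p-1)/2) * u ^ ((p-1)/2) = u ^ (p - 1) := by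
    rw [← Real.rpow_add' hu hp1]; ring_nf
  have h2 : v ^ ((p-1)/2) * v ^ ((p-1)/2) = v ^ (p - 1) := by
    rw [← Real.rpow_add' hv hp1]; ring_nf
  have h3 : u ^ ((1:ℝ)/2) * u ^ ((1:ℝ)/2) = u := by
    rw [← Real.rpow_add' hu (by norm_num)]; norm_num
  have h4 : v ^ ((1:ℝ)/2) * v ^ ((1:ℝ)/2) = v := by
    rw [← Real.rpow_add' hv (by norm_num)]; norm_num
  have h5 : u ^ ((p-1)/2) * u ^ ((1:ℝ)/2) = u ^ (p / 2) := by
    rw [← Real.rpow_add' hu hp2]; ring_nf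
  have h6 : v ^ ((p-1)/2) * v ^ ((1:ℝ)/2) = v ^ (p / 2) := by
    rw [← Real.rpow_add' hv hp2]; ring_nf
  calc (u ^ (p / 2) + v ^ (p / 2)) ^ 2
      = (u ^ ((p-1)/2) * u ^ ((1:ℝ)/2) + v ^ ((p-1)/2) * v ^ ((1:ℝ)/2)) ^ 2 := by
        rw [h5, h6]
    _ ≤ (u ^ ((p-1)/2) * u ^ ((p-1)/2) + v ^ ((p-1)/2) * v ^ ((p-1)/2))
        * (u ^ ((1:ℝ)/2) * u ^ ((1:ℝ)/2) + v ^ ((1:ℝ)/2) * v ^ ((1:ℝ)/2)) :=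
        cs_aux _ _ _ _
    _ = (u ^ (p - 1) + v ^ (p - 1)) * (u + v) := by rw [h1, h2, h3, h4]

noncomputable section

private lemma half_aux {p v b : ℝ} (hp : 2 ≤ p) (hv : 0 ≤ v) (hvb : v ≤ b) :
    4 / p ^ 2 * (v ^ (p / 2) * v ^ (p / 2)) ≤ v ^ (p - 1) * b := by
  have hp0 : (0:ℝ) < p := by linarith
  have e1 : v ^ (p / 2) * v ^ (p / 2) = v ^ p := by
    rw [← Real.rpow_add' hv (by intro h; nlinarith : p / 2 + p / 2 ≠ 0)]; ring_nf
  have e2 : v ^ (p - 1) * v = v ^ p := by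
    nth_rewrite 2 [← Real.rpow_one v]
    rw [← Real.rpow_add' hv (by intro h; nlinarith : p - 1 + 1 ≠ 0)]; ring_nf
  have h41 : 4 / p ^ 2 ≤ 1 := by
    rw [div_le_one (by positivity)]; nlinarith
  have h3 : v ^ p ≤ v ^ (p - 1) * b := by
    calc v ^ p = v ^ (p - 1) * v := e2.symm
      _ ≤ v ^ (p - 1) * b := mul_le_mul_of_nonneg_left hvb (Real.rpow_nonneg hv _)
  nlinarith [Real.rpow_nonneg hv p, e1]

private lemma scalar_aux {p a b u v s : ℝ} (hp : 2 ≤ p) (ha : 0 ≤ a) (hb : 0 ≤ b)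
    (hu : 0 ≤ u) (hv : 0 ≤ v) (hua : u ≤ a) (hvb : v ≤ b)
    (hm1 : b ≤ a → v ≤ u ∧ u - v ≤ a - b) (hm2 : a ≤ b → u ≤ v ∧ v - u ≤ b - a)
    (hs : |s| ≤ a * b) :
    4 / p ^ 2 * (u ^ (p/2) * u ^ (p/2) - 2 * (u ^ (p/2) / a * (v ^ (p/2) / b) * s)
        + v ^ (p/2) * v ^ (p/2))
      ≤ u ^ (p-1) / a * (a * a) - u ^ (p-1) / a * s - v ^ (p-1) / b * s
        + v ^ (p-1) / b * (b * b) := by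
  have hp0 : (0:ℝ) < p := by linarith
  have hp1 : (0:ℝ) < p - 1 := by linarith
  rcases eq_or_lt_of_le ha with ha0 | ha0
  · -- a = 0 hence u = 0, s = 0
    have hu0 : u = 0 := le_antisymm (by linarith) hu
    have hs0 : s = 0 := by
      have : |s| ≤ 0 := by rw [← ha0] at hs; simpa using hs
      simpa [abs_nonpos_iff] using this
    have hz1 : u ^ (p/2) = 0 := by rw [hu0, Real.zero_rpow (by positivity)]
    have hz2 : u ^ (p-1) = 0 := by rw [hu0, Real.zero_rpow (ne_of_gt hp1)]
    rw [hz1, hz2, hs0]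
    rcases eq_or_lt_of_le hb with hb0 | hb0
    · have hv0 : v = 0 := le_antisymm (by linarith) hv
      have hz3 : v ^ (p/2) = 0 := by rw [hv0, Real.zero_rpow (by positivity)]
      rw [← hb0]
      simp [hz3]
    · have : v ^ (p-1) / b * (b*b) = v ^ (p-1) * b := by field_simp
      rw [this]
      have := half_aux hp hv hvb
      simp only [zero_div, zero_mul, mul_zero, zero_sub, sub_zero, zero_add, neg_zero]
      linarith [this]
  · rcases eq_or_lt_of_le hb with hb0 | hb0
    · -- b = 0 hence v = 0, s = 0
      have hv0 : v = 0 := le_antisymm (by linarith) hv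
      have hs0 : s = 0 := by
        have : |s| ≤ 0 := by rw [← hb0] at hs; simpa using hs
        simpa [abs_nonpos_iff] using this
      have hz1 : v ^ (p/2) = 0 := by rw [hv0, Real.zero_rpow (by positivity)]
      have hz2 : v ^ (p-1) = 0 := by rw [hv0, Real.zero_rpow (ne_of_gt hp1)]
      rw [hz1, hz2, hs0]
      have : u ^ (p-1) / a * (a*a) = u ^ (p-1) * a := by field_simp
      rw [this]
      have := half_aux hp hu hua
      simp only [zero_div, zero_mul, mul_zero, zero_sub, sub_zero, zero_add, add_zero, neg_zero,
        _root_.div_zero]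
      linarith [this]
    · -- a, b > 0
      have hE1 : 4 / p ^ 2 * (u ^ (p/2) - v ^ (p/2)) ^ 2
          ≤ (u ^ (p-1) - v ^ (p-1)) * (a - b) := by
        rcases le_total b a with h | h
        · obtain ⟨hvu, hlip⟩ := hm1 h
          have hmono : v ^ (p-1) ≤ u ^ (p-1) := Real.rpow_le_rpow hv hvu (by linarith)
          calc 4 / p ^ 2 * (u ^ (p/2) - v ^ (p/2)) ^ 2
              ≤ (u ^ (p-1) - v ^ (p-1)) * (u - v) := key1 hp hv hvu
            _ ≤ (u ^ (p-1) - v ^ (p-1)) * (a - b) :=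
                mul_le_mul_of_nonneg_left hlip (sub_nonneg.2 hmono)
        · obtain ⟨huv, hlip⟩ := hm2 h
          have hmono : u ^ (p-1) ≤ v ^ (p-1) := Real.rpow_le_rpow hu huv (by linarith)
          have e : (u ^ (p/2) - v ^ (p/2)) ^ 2 = (v ^ (p/2) - u ^ (p/2)) ^ 2 := by ring
          calc 4 / p ^ 2 * (u ^ (p/2) - v ^ (p/2)) ^ 2
              = 4 / p ^ 2 * (v ^ (p/2) - u ^ (p/2)) ^ 2 := by rw [e]
            _ ≤ (v ^ (p-1) - u ^ (p-1)) * (v - u) := key1 hp hu huv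
            _ ≤ (v ^ (p-1) - u ^ (p-1)) * (b - a) :=
                mul_le_mul_of_nonneg_left hlip (sub_nonneg.2 hmono)
            _ = (u ^ (p-1) - v ^ (p-1)) * (a - b) := by ring
      have hE2 : 4 / p ^ 2 * (u ^ (p/2) + v ^ (p/2)) ^ 2
          ≤ (u ^ (p-1) + v ^ (p-1)) * (a + b) := by
        have h41 : 4 / p ^ 2 ≤ 1 := by rw [div_le_one (by positivity)]; nlinarith
        have k := key2 hp hu hv
        have hc : (u ^ (p-1) + v ^ (p-1)) * (u + v) ≤ (u ^ (p-1) + v ^ (p-1)) * (a + b) := by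
          apply mul_le_mul_of_nonneg_left (by linarith)
          positivity
        nlinarith [sq_nonneg (u ^ (p/2) + v ^ (p/2))]
      have h1 : 0 ≤ a * b + s := by linarith [neg_abs_le s]
      have h2 : 0 ≤ a * b - s := by linarith [le_abs_self s]
      have hE1' : 0 ≤ (u ^ (p-1) - v ^ (p-1)) * (a - b)
          - 4 / p ^ 2 * (u ^ (p/2) - v ^ (p/2)) ^ 2 := by linarith
      have hE2' : 0 ≤ (u ^ (p-1) + v ^ (p-1)) * (a + b)
          - 4 / p ^ 2 * (u ^ (p/2) + v ^ (p/2)) ^ 2 := by linarith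
      have hsum : 0 ≤ (a*b + s) * ((u ^ (p-1) - v ^ (p-1)) * (a - b)
            - 4 / p ^ 2 * (u ^ (p/2) - v ^ (p/2)) ^ 2)
          + (a*b - s) * ((u ^ (p-1) + v ^ (p-1)) * (a + b)
            - 4 / p ^ 2 * (u ^ (p/2) + v ^ (p/2)) ^ 2) :=
        add_nonneg (mul_nonneg h1 hE1') (mul_nonneg h2 hE2')
      have hid : 2 * (a*b) * ((u ^ (p-1) / a * (a * a) - u ^ (p-1) / a * s
            - v ^ (p-1) / b * s + v ^ (p-1) / b * (b * b))
          - 4 / p ^ 2 * (u ^ (p/2) * u ^ (p/2)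
            - 2 * (u ^ (p/2) / a * (v ^ (p/2) / b) * s) + v ^ (p/2) * v ^ (p/2)))
          = (a*b + s) * ((u ^ (p-1) - v ^ (p-1)) * (a - b)
            - 4 / p ^ 2 * (u ^ (p/2) - v ^ (p/2)) ^ 2)
          + (a*b - s) * ((u ^ (p-1) + v ^ (p-1)) * (a + b)
            - 4 / p ^ 2 * (u ^ (p/2) + v ^ (p/2)) ^ 2) := by
        field_simp
        ring
      have h2ab : (0:ℝ) < 2 * (a*b) := by positivity
      have hD : 2 * (a*b) * 0 ≤ 2 * (a*b) * ((u ^ (p-1) / a * (a * a) - u ^ (p-1) / a * s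
            - v ^ (p-1) / b * s + v ^ (p-1) / b * (b * b))
          - 4 / p ^ 2 * (u ^ (p/2) * u ^ (p/2)
            - 2 * (u ^ (p/2) / a * (v ^ (p/2) / b) * s) + v ^ (p/2) * v ^ (p/2))) := by
        rw [mul_zero, hid]; exact hsum
      have := le_of_mul_le_mul_left hD h2ab
      linarith

private lemma Hfun_norm {n : ℕ} {lam : ℝ} (hlam : lam ≠ 0) (ξ : EuclideanSpace ℝ (Fin n)) :
    ‖Hfun lam ξ‖ = (max (‖ξ‖ - 1) 0) ^ lam := by
  unfold Hfun
  split_ifs with h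
  · simp [h, Real.zero_rpow hlam]
  · rw [norm_smul, Real.norm_eq_abs, abs_of_nonneg (by positivity),
      div_mul_cancel₀ _ (norm_ne_zero_iff.2 h)]

private lemma Hfun_inner_left {n : ℕ} (lam : ℝ) (ξ ζ : EuclideanSpace ℝ (Fin n)) :
    (inner ℝ (Hfun lam ξ) ζ : ℝ) = (max (‖ξ‖ - 1) 0) ^ lam / ‖ξ‖ * inner ℝ ξ ζ := by
  unfold Hfun
  split_ifs with h
  · simp [h]
  · exact real_inner_smul_left _ _ _

/-- For `n ≥ 1` and `2 ≤ p < ∞`, for every `ξ, η ∈ ℝ^n`: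
`⟨H_{p-1}(ξ) - H_{p-1}(η), ξ - η⟩ ≥ (4/p²) |H_{p/2}(ξ) - H_{p/2}(η)|²`. -/
theorem stmt_5 (n : ℕ) (hn : 1 ≤ n) (p : ℝ) (hp : 2 ≤ p)
    (ξ η : EuclideanSpace ℝ (Fin n)) :
    4 / p ^ 2 * ‖Hfun (p / 2) ξ - Hfun (p / 2) η‖ ^ 2 ≤
      (inner ℝ (Hfun (p - 1) ξ - Hfun (p - 1) η) (ξ - η) : ℝ) := by
  have hp0 : (0:ℝ) < p := by linarith
  set a := ‖ξ‖ with hadef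
  set b := ‖η‖ with hbdef
  set u := max (a - 1) 0 with hudef
  set v := max (b - 1) 0 with hvdef
  set s := (inner ℝ ξ η : ℝ) with hsdef
  have hp2 : (p / 2 : ℝ) ≠ 0 := by positivity
  have ha : 0 ≤ a := norm_nonneg _
  have hb : 0 ≤ b := norm_nonneg _
  have hu : 0 ≤ u := le_max_right _ _
  have hv : 0 ≤ v := le_max_right _ _
  have hua : u ≤ a := max_le (by linarith) ha
  have hvb : v ≤ b := max_le (by linarith) hb
  have hcs : |s| ≤ a * b := abs_real_inner_le_norm ξ η
  have hnorm : ‖Hfun (p / 2) ξ - Hfun (p / 2) η‖ ^ 2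
      = u ^ (p/2) * u ^ (p/2) - 2 * (u ^ (p/2) / a * (v ^ (p/2) / b) * s)
        + v ^ (p/2) * v ^ (p/2) := by
    rw [norm_sub_sq_real, Hfun_norm hp2, Hfun_norm hp2]
    have hx : (inner ℝ (Hfun (p/2) ξ) (Hfun (p/2) η) : ℝ)
        = u ^ (p/2) / a * (v ^ (p/2) / b) * s := by
      rw [Hfun_inner_left, real_inner_comm (Hfun (p/2) η) ξ, Hfun_inner_left, real_inner_comm ξ η]
      ring
    rw [hx]; ring
  have hinner : (inner ℝ (Hfun (p-1) ξ - Hfun (p-1) η) (ξ - η) : ℝ)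
      = u ^ (p-1) / a * (a * a) - u ^ (p-1) / a * s - v ^ (p-1) / b * s
        + v ^ (p-1) / b * (b * b) := by
    rw [inner_sub_left, inner_sub_right, inner_sub_right,
      Hfun_inner_left, Hfun_inner_left, Hfun_inner_left, Hfun_inner_left,
      real_inner_self_eq_norm_mul_norm, real_inner_self_eq_norm_mul_norm,
      real_inner_comm ξ η]
    ring
  rw [hnorm, hinner]
  apply scalar_aux hp ha hb hu hv hua hvb ?_ ?_ hcs
  · intro hba
    constructor
    · exact max_le_max (by linarith) le_rfl
    · rcases le_total (b - 1) 0 with h | h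
      · rcases le_total (a - 1) 0 with h' | h'
        · rw [hudef, hvdef, max_eq_right h, max_eq_right h']; linarith
        · rw [hudef, hvdef, max_eq_right h, max_eq_left h']; linarith
      · rw [hudef, hvdef, max_eq_left h, max_eq_left (by linarith)]; linarith
  · intro hab
    constructor
    · exact max_le_max (by linarith) le_rfl
    · rcases le_total (a - 1) 0 with h | h
      · rcases le_total (b - 1) 0 with h' | h'
        · rw [hudef, hvdef, max_eq_right h, max_eq_right h']; linarith
        · rw [hudef, hvdef, max_eq_right h, max_eq_left h']; linarith
      · rw [hudef, hvdef, max_eq_left h, max_eq_left (by linarith)]; linarith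

end
end
end

section
/- Let n ≥ 1 and 2 ≤ p < ∞. Then for every ξ, η ∈ ℝ^n one has |H_{p−1}(ξ) − H_{p−1}(η)| ≤ (p−1) ( |H_{p/2}(ξ)|^{(p−2)/p} + |H_{p/2}(η)|^{(p−2)/p} ) |H_{p/2}(ξ) − H_{p/2}(η)|. -/
open MeasureTheory Set ENNReal
open scoped Classical

noncomputable section

lemma bern_aux {α a b : ℝ} (h0 : 0 ≤ α) (h1 : α ≤ 1) (hb : 0 ≤ b) (hab : b ≤ a) :
    (a ^ α - b ^ α) * b ≤ α * (b ^ α * (a - b)) := by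
  rcases eq_or_lt_of_le hb with hb0 | hb0
  · rw [← hb0]
    simp only [mul_zero, sub_zero]
    exact mul_nonneg h0 (mul_nonneg (Real.rpow_nonneg le_rfl _) (by linarith))
  · have ht : (1 : ℝ) ≤ a / b := (one_le_div hb0).2 hab
    have hbern := rpow_one_add_le_one_add_mul_self (s := a / b - 1) (by linarith) h0 h1
    rw [add_sub_cancel] at hbern
    have hdiv : (a / b) ^ α = a ^ α / b ^ α := Real.div_rpow (le_trans hb hab) hb α
    rw [hdiv] at hbern
    have hbα : 0 < b ^ α := Real.rpow_pos_of_pos hb0 α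
    have h2 : a ^ α ≤ (1 + α * (a / b - 1)) * b ^ α := by
      rw [div_le_iff₀ hbα] at hbern; linarith
    have h3 : (a / b - 1) * b = a - b := by field_simp
    have h4 : (a ^ α - b ^ α) * b ≤ (α * (a / b - 1) * b ^ α) * b :=
      mul_le_mul_of_nonneg_right (by nlinarith) hb
    refine h4.trans_eq ?_
    have h5 : α * (a / b - 1) * b ^ α * b = α * (b ^ α * ((a / b - 1) * b)) := by ring
    rw [h5, h3]

lemma key_aux {E : Type*} [NormedAddCommGroup E] [NormedSpace ℝ E]
    {α : ℝ} (h0 : 0 ≤ α) (h1 : α ≤ 1) (A B : E) (hBA : ‖B‖ ≤ ‖A‖) :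
    ‖(‖A‖ ^ α) • A - (‖B‖ ^ α) • B‖ ≤ (1 + α) * ((‖A‖ ^ α + ‖B‖ ^ α) * ‖A - B‖) := by
  have ha : (0:ℝ) ≤ ‖A‖ := norm_nonneg _
  have hb : (0:ℝ) ≤ ‖B‖ := norm_nonneg _
  have hsplit : (‖A‖ ^ α) • A - (‖B‖ ^ α) • B
      = (‖A‖ ^ α) • (A - B) + (‖A‖ ^ α - ‖B‖ ^ α) • B := by
    rw [smul_sub, sub_smul]; abel
  rw [hsplit]
  have hle : ‖B‖ ^ α ≤ ‖A‖ ^ α := Real.rpow_le_rpow hb hBA h0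
  have h2 : ‖(‖A‖ ^ α) • (A - B)‖ = ‖A‖ ^ α * ‖A - B‖ := by
    rw [norm_smul, Real.norm_of_nonneg (Real.rpow_nonneg ha α)]
  have h3 : ‖(‖A‖ ^ α - ‖B‖ ^ α) • B‖ = (‖A‖ ^ α - ‖B‖ ^ α) * ‖B‖ := by
    rw [norm_smul, Real.norm_of_nonneg (by linarith)]
  have hbern := bern_aux h0 h1 hb hBA
  have hnn : ‖A‖ - ‖B‖ ≤ ‖A - B‖ := norm_sub_norm_le A B
  have h4 : (0:ℝ) ≤ ‖A - B‖ := norm_nonneg _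
  calc ‖(‖A‖ ^ α) • (A - B) + (‖A‖ ^ α - ‖B‖ ^ α) • B‖
      ≤ ‖(‖A‖ ^ α) • (A - B)‖ + ‖(‖A‖ ^ α - ‖B‖ ^ α) • B‖ := norm_add_le _ _
    _ ≤ (1 + α) * ((‖A‖ ^ α + ‖B‖ ^ α) * ‖A - B‖) := by
        rw [h2, h3]
        have hb2 : (‖A‖ ^ α - ‖B‖ ^ α) * ‖B‖ ≤ α * (‖B‖ ^ α * ‖A - B‖) := by
          refine hbern.trans ?_
          exact mul_le_mul_of_nonneg_left
            (mul_le_mul_of_nonneg_left hnn (Real.rpow_nonneg hb α)) h0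
        nlinarith [mul_nonneg (mul_nonneg h0 (Real.rpow_nonneg ha α)) h4,
          mul_nonneg (Real.rpow_nonneg hb α) h4]

lemma key {E : Type*} [NormedAddCommGroup E] [NormedSpace ℝ E]
    {α : ℝ} (h0 : 0 ≤ α) (h1 : α ≤ 1) (A B : E) :
    ‖(‖A‖ ^ α) • A - (‖B‖ ^ α) • B‖ ≤ (1 + α) * ((‖A‖ ^ α + ‖B‖ ^ α) * ‖A - B‖) := by
  rcases le_total ‖B‖ ‖A‖ with h | h
  · exact key_aux h0 h1 A B h
  · have := key_aux h0 h1 B A h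
    rw [norm_sub_rev ((‖B‖ ^ α) • B), norm_sub_rev B A] at this
    linarith

lemma Hrepr {n : ℕ} {p : ℝ} (hp : 2 ≤ p) (ξ : EuclideanSpace ℝ (Fin n)) :
    Hfun (p - 1) ξ = (‖Hfun (p / 2) ξ‖ ^ ((p - 2) / p)) • Hfun (p / 2) ξ := by
  have hp0 : (0:ℝ) < p := by linarith
  by_cases hξ : ξ = 0
  · simp [Hfun, hξ]
  · have hξn : (0:ℝ) < ‖ξ‖ := norm_pos_iff.2 hξ
    have hhn : (0:ℝ) ≤ max (‖ξ‖ - 1) 0 := le_max_right _ _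
    rw [Hfun, if_neg hξ, Hfun, if_neg hξ]
    have hnorm : ‖((max (‖ξ‖ - 1) 0) ^ (p / 2) / ‖ξ‖) • ξ‖ = (max (‖ξ‖ - 1) 0) ^ (p / 2) := by
      rw [norm_smul, Real.norm_of_nonneg (div_nonneg (Real.rpow_nonneg hhn _) hξn.le),
        div_mul_cancel₀ _ hξn.ne']
    rw [hnorm, smul_smul]
    congr 1
    have e1 : ((max (‖ξ‖ - 1) 0) ^ (p / 2)) ^ ((p - 2) / p)
        = (max (‖ξ‖ - 1) 0) ^ ((p - 2) / 2) := by
      rw [← Real.rpow_mul hhn]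
      congr 1
      field_simp
    have hne : (p - 2) / 2 + p / 2 ≠ 0 := by
      have h2 : (p - 2) / 2 + p / 2 = p - 1 := by ring
      rw [h2]; intro hc; linarith [hc]
    rw [e1, ← mul_div_assoc]
    congr 1
    rw [← Real.rpow_add' hhn hne]
    congr 1
    ring

/-- For `n ≥ 1` and `2 ≤ p < ∞`, for every `ξ, η ∈ ℝ^n`:
`|H_{p-1}(ξ) - H_{p-1}(η)| ≤ (p-1)(|H_{p/2}(ξ)|^{(p-2)/p} + |H_{p/2}(η)|^{(p-2)/p}) |H_{p/2}(ξ) - H_{p/2}(η)|`. -/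
theorem stmt_6 (n : ℕ) (hn : 1 ≤ n) (p : ℝ) (hp : 2 ≤ p)
    (ξ η : EuclideanSpace ℝ (Fin n)) :
    ‖Hfun (p - 1) ξ - Hfun (p - 1) η‖ ≤
      (p - 1) * (‖Hfun (p / 2) ξ‖ ^ ((p - 2) / p) + ‖Hfun (p / 2) η‖ ^ ((p - 2) / p)) *
        ‖Hfun (p / 2) ξ - Hfun (p / 2) η‖ := by
  have hp0 : (0:ℝ) < p := by linarith
  set α : ℝ := (p - 2) / p with hα
  have h0 : 0 ≤ α := div_nonneg (by linarith) hp0.le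
  have h1 : α ≤ 1 := by rw [hα, div_le_one hp0]; linarith
  rw [Hrepr hp ξ, Hrepr hp η]
  refine (key h0 h1 _ _).trans ?_
  have hc : 1 + α ≤ p - 1 := by
    have hq : α * p = p - 2 := by rw [hα]; field_simp
    nlinarith [hq, h0, hp0]
  have hS : (0:ℝ) ≤ ‖Hfun (p/2) ξ‖ ^ α + ‖Hfun (p/2) η‖ ^ α :=
    add_nonneg (Real.rpow_nonneg (norm_nonneg _) _) (Real.rpow_nonneg (norm_nonneg _) _)
  have hT : (0:ℝ) ≤ ‖Hfun (p/2) ξ - Hfun (p/2) η‖ := norm_nonneg _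
  rw [mul_assoc]
  exact mul_le_mul_of_nonneg_right hc (by positivity)

end
end
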